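/- Let A be an asymptotic basis for N of order at most h, and X a finite subset of A with G(A∖X) < ∞. Let μ = μ(A,X) = min over y ∈ A∖X of diam(X ∪ {y}). Then G(A∖X) ≤ 4h(2hμ + 1). -/

import Mathlib

open Filter Set Pointwise

/-- `nfold A h` is the `h`-fold sumset of `A` (sums of exactly `h` elements). -/
def nfold (A : Set ℤ) : ℕ → Set ℤ
  | 0 => {0}
  | n + 1 => A + nfold A n

/-- The `h`-fold sumset of `A` contains all sufficiently large naturals. -/
def CoversAt (A : Set ℤ) (h : ℕ) : Prop :=
  ∀ᶠ m : ℕ in Filter.atTop, (m : ℤ) ∈ nfold A h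

/-- `A` is an asymptotic basis for ℕ. -/
def IsAsympBasis (A : Set ℤ) : Prop := ∃ h, CoversAt A h

/-- The order `G(A)` of an asymptotic basis. -/
noncomputable def basisOrder (A : Set ℤ) : ℕ := sInf {h | CoversAt A h}

/-- Lower asymptotic density of a set of integers. -/
noncomputable def lowerDensity (S : Set ℤ) : ℝ :=
  Filter.liminf (fun n : ℕ => ((S ∩ Set.Icc 1 (n : ℤ)).ncard : ℝ) / n) Filter.atTop

/-- Diameter of a set of integers. -/
noncomputable def diam (S : Set ℤ) : ℤ := sSup S - sInf S

/-- `h`-fold sumset in `ZMod n`. -/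
def nfoldZ {n : ℕ} (A : Set (ZMod n)) : ℕ → Set (ZMod n)
  | 0 => {0}
  | t + 1 => A + nfoldZ A t

lemma mem_nfold_succ {A : Set ℤ} {n : ℕ} {z : ℤ} :
    z ∈ nfold A (n+1) ↔ ∃ x ∈ A, ∃ y ∈ nfold A n, x + y = z := by
  simp [nfold, Set.mem_add]

lemma mem_nfold_zero {A : Set ℤ} {z : ℤ} : z ∈ nfold A 0 ↔ z = 0 := by
  simp [nfold]

lemma nfold_add_mem {A : Set ℤ} : ∀ {s : ℕ} {t : ℕ} {x y : ℤ},
    x ∈ nfold A s → y ∈ nfold A t → x + y ∈ nfold A (s + t) := by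
  intro s
  induction s with
  | zero => intro t x y hx hy; rw [mem_nfold_zero] at hx; subst hx; simpa using hy
  | succ n ih =>
      intro t x y hx hy
      rw [mem_nfold_succ] at hx
      obtain ⟨a, ha, w, hw, rfl⟩ := hx
      have : a + (w + y) ∈ nfold A (n + t + 1) := by
        rw [mem_nfold_succ]; exact ⟨a, ha, w + y, ih hw hy, rfl⟩
      have he : n + t + 1 = n + 1 + t := by omega
      rw [he] at this
      convert this using 1
      ring

lemma nfold_nsmul_mem {A : Set ℤ} {a : ℕ} {m : ℤ} (hm : m ∈ nfold A a) :
    ∀ (k : ℕ), (k : ℤ) * m ∈ nfold A (k * a) := by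
  intro k
  induction k with
  | zero => simp [mem_nfold_zero]
  | succ n ih =>
      have := nfold_add_mem hm ih
      have he : a + n * a = (n+1) * a := by ring
      rw [he] at this
      convert this using 1
      push_cast
      ring

lemma mem_nfold_one {A : Set ℤ} {b : ℤ} (hb : b ∈ A) : b ∈ nfold A 1 := by
  rw [mem_nfold_succ]
  exact ⟨b, hb, 0, by simp [mem_nfold_zero], by ring⟩

/-- integer-threshold covering -/
def ICov (A : Set ℤ) (t : ℕ) : Prop := ∃ N : ℤ, ∀ z : ℤ, N ≤ z → z ∈ nfold A t

lemma iCov_of_coversAt {A : Set ℤ} {t : ℕ} (hc : CoversAt A t) : ICov A t := by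
  obtain ⟨N, hN⟩ := Filter.eventually_atTop.mp hc
  refine ⟨N, fun z hz => ?_⟩
  have h0 : (0:ℤ) ≤ z := le_trans (by positivity) hz
  have : (N : ℕ) ≤ z.toNat := by omega
  have := hN z.toNat this
  rwa [Int.toNat_of_nonneg h0] at this

lemma coversAt_of_iCov {A : Set ℤ} {t : ℕ} (hc : ICov A t) : CoversAt A t := by
  obtain ⟨N, hN⟩ := hc
  rw [CoversAt, Filter.eventually_atTop]
  refine ⟨N.toNat, fun m hm => hN m ?_⟩
  calc N ≤ (N.toNat : ℤ) := Int.self_le_toNat N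
  _ ≤ (m : ℤ) := by exact_mod_cast hm

lemma coversAt_zero_false {A : Set ℤ} (hc : CoversAt A 0) : False := by
  obtain ⟨N, hN⟩ := Filter.eventually_atTop.mp hc
  have h1 := hN N le_rfl
  have h2 := hN (N+1) (by omega)
  rw [mem_nfold_zero] at h1 h2
  omega

lemma nonempty_of_coversAt {A : Set ℤ} {t : ℕ} (hc : CoversAt A t) : A.Nonempty := by
  rcases t with _ | n
  · exact absurd hc coversAt_zero_false
  · obtain ⟨N, hN⟩ := Filter.eventually_atTop.mp hc
    have := hN N le_rfl
    rw [mem_nfold_succ] at this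
    obtain ⟨a, ha, -⟩ := this
    exact ⟨a, ha⟩

lemma coversAt_succ {A : Set ℤ} {t : ℕ} (hne : A.Nonempty) (hc : CoversAt A t) :
    CoversAt A (t+1) := by
  obtain ⟨a, ha⟩ := hne
  obtain ⟨N, hN⟩ := iCov_of_coversAt hc
  apply coversAt_of_iCov
  refine ⟨N + |a|, fun z hz => ?_⟩
  have : z - a ∈ nfold A t := by
    apply hN
    have h1 : -a ≤ |a| := neg_le_abs a
    have h2 : a ≤ |a| := le_abs_self a
    omega
  rw [mem_nfold_succ]
  exact ⟨a, ha, z - a, this, by ring⟩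

lemma coversAt_mono {A : Set ℤ} {t t' : ℕ} (hc : CoversAt A t) (ht : t ≤ t') :
    CoversAt A t' := by
  induction t' with
  | zero => have : t = 0 := by omega
            subst this; exact hc
  | succ n ih =>
      rcases Nat.lt_or_ge t (n+1) with hlt | hge
      · exact coversAt_succ (nonempty_of_coversAt hc) (ih (by omega))
      · have : t = n + 1 := by omega
        subst this; exact hc


/-- iterated gcd of modulus with a list -/
def modgcd : ℕ → List ℕ → ℕ
  | γ, [] => γ
  | γ, e :: tl => modgcd (Nat.gcd γ e) tl

/-- capacity list for the staircase -/
def caps : ℕ → List ℕ → List ℕ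
  | _, [] => []
  | γ, e :: tl => (γ / Nat.gcd γ e - 1) :: caps (Nat.gcd γ e) tl

/-- integer dot product of a coefficient list with a (nat) generator list -/
def dotZ (cs es : List ℕ) : ℤ := (List.zipWith (fun (c e : ℕ) => (c : ℤ) * (e : ℤ)) cs es).sum

lemma modgcd_dvd_base : ∀ (es : List ℕ) (γ : ℕ), modgcd γ es ∣ γ := by
  intro es
  induction es with
  | nil => intro γ; simp [modgcd]
  | cons e tl ih =>
      intro γ
      exact dvd_trans (ih (Nat.gcd γ e)) (Nat.gcd_dvd_left γ e)

lemma modgcd_dvd_mem : ∀ (es : List ℕ) (γ : ℕ) (e : ℕ), e ∈ es → modgcd γ es ∣ e := by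
  intro es
  induction es with
  | nil => intro γ e he; simp at he
  | cons a tl ih =>
      intro γ e he
      rcases List.mem_cons.mp he with rfl | hmem
      · exact dvd_trans (modgcd_dvd_base tl (Nat.gcd γ e)) (Nat.gcd_dvd_right γ e)
      · exact ih _ e hmem

lemma modgcd_pos {es : List ℕ} {γ : ℕ} (hγ : 0 < γ) : 0 < modgcd γ es :=
  Nat.pos_of_dvd_of_pos (modgcd_dvd_base es γ) hγ

lemma caps_sum_le : ∀ (es : List ℕ) (γ : ℕ), 0 < γ → (caps γ es).sum ≤ γ - 1 := by
  intro es
  induction es with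
  | nil => intro γ hγ; simp [caps]
  | cons e tl ih =>
      intro γ hγ
      have hd : Nat.gcd γ e ∣ γ := Nat.gcd_dvd_left γ e
      have hdpos : 0 < Nat.gcd γ e := Nat.gcd_pos_of_pos_left e hγ
      obtain ⟨m, hm⟩ := hd
      have hmpos : 0 < m := by
        rcases Nat.eq_zero_or_pos m with rfl | h; · omega
        · exact h
      have hm' : γ = m * Nat.gcd γ e := by rw [Nat.mul_comm]; exact hm
      have hdiv : γ / Nat.gcd γ e = m := Nat.div_eq_of_eq_mul_left hdpos hm'
      have := ih (Nat.gcd γ e) hdpos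
      simp only [caps, List.sum_cons]
      rw [hdiv]
      set d := Nat.gcd γ e
      have key : m + d ≤ d * m + 1 := by nlinarith
      omega

/-- solvability of c·e ≡ z (mod γ) with small c -/
lemma solv (γ e : ℕ) (hγ : 0 < γ) (z : ℤ) (hz : (Nat.gcd γ e : ℤ) ∣ z) :
    ∃ c : ℕ, c < γ / Nat.gcd γ e ∧ (γ : ℤ) ∣ z - (c : ℤ) * e := by
  set d := Nat.gcd γ e with hd
  have hdpos : 0 < d := Nat.gcd_pos_of_pos_left e hγ
  obtain ⟨m, hm⟩ : d ∣ γ := Nat.gcd_dvd_left γ e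
  obtain ⟨e', he'⟩ : d ∣ e := Nat.gcd_dvd_right γ e
  have hmpos : 0 < m := by
    rcases Nat.eq_zero_or_pos m with rfl | hp; · omega
    · exact hp
  have hm'' : γ = m * d := by rw [Nat.mul_comm]; exact hm
  have hdiv : γ / d = m := Nat.div_eq_of_eq_mul_left hdpos hm''
  obtain ⟨z', hz'⟩ := hz
  -- Bezout
  have hbez : (d : ℤ) = γ * Int.gcdA γ e + e * Int.gcdB γ e := by
    have := Int.gcd_eq_gcd_ab (γ : ℤ) (e : ℤ)
    rwa [Int.gcd_natCast_natCast] at this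
  set a := Int.gcdA (γ:ℤ) (e:ℤ)
  set b := Int.gcdB (γ:ℤ) (e:ℤ)
  set c' : ℤ := (b * z') % (m : ℤ) with hc'
  have hmz : (0:ℤ) < (m:ℤ) := by exact_mod_cast hmpos
  have hc'nonneg : 0 ≤ c' := Int.emod_nonneg _ (by omega)
  have hc'lt : c' < (m:ℤ) := Int.emod_lt_of_pos _ hmz
  set q : ℤ := (b * z') / (m : ℤ) with hq
  have hmod : c' = b * z' - (m:ℤ) * q := by
    rw [hc', hq]; rw [Int.emod_def]
  refine ⟨c'.toNat, ?_, ?_⟩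
  · rw [hdiv]; omega
  · have hct : (c'.toNat : ℤ) = c' := Int.toNat_of_nonneg hc'nonneg
    rw [hct]
    refine ⟨z' * a + q * e', ?_⟩
    have hγeq : (γ : ℤ) = (d : ℤ) * (m : ℤ) := by exact_mod_cast hm
    have heeq : (e : ℤ) = (d : ℤ) * (e' : ℤ) := by exact_mod_cast he'
    have h3 : (d:ℤ) - (e:ℤ) * b = (γ:ℤ) * a := by linarith [hbez]
    have h4 : (m:ℤ) * (e:ℤ) = (γ:ℤ) * (e':ℤ) := by rw [heeq, hγeq]; ring
    calc z - c' * e = (d:ℤ) * z' - (b * z' - (m:ℤ) * q) * e := by rw [hz', hmod]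
    _ = z' * ((d:ℤ) - (e:ℤ) * b) + q * ((m:ℤ) * (e:ℤ)) := by ring
    _ = z' * ((γ:ℤ) * a) + q * ((γ:ℤ) * (e':ℤ)) := by rw [h3, h4]
    _ = (γ:ℤ) * (z' * a + q * e') := by ring

/-- the staircase lemma -/
lemma stair : ∀ (es : List ℕ) (γ : ℕ), 0 < γ → modgcd γ es = 1 → ∀ x : ℤ,
    ∃ cs : List ℕ, List.Forall₂ (· ≤ ·) cs (caps γ es) ∧ (γ : ℤ) ∣ x - dotZ cs es := by
  intro es
  induction es with
  | nil =>
      intro γ hγ hg x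
      refine ⟨[], List.Forall₂.nil, ?_⟩
      simp [modgcd] at hg
      simp [hg, dotZ]
  | cons e tl ih =>
      intro γ hγ hg x
      have hdpos : 0 < Nat.gcd γ e := Nat.gcd_pos_of_pos_left e hγ
      obtain ⟨cst, hcst, hdvd⟩ := ih (Nat.gcd γ e) hdpos hg x
      obtain ⟨c, hclt, hcd⟩ := solv γ e hγ (x - dotZ cst tl) hdvd
      refine ⟨c :: cst, ?_, ?_⟩
      · simp only [caps]
        exact List.Forall₂.cons (by omega) hcst
      · have : dotZ (c :: cst) (e :: tl) = (c:ℤ) * e + dotZ cst tl := by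
          simp [dotZ]
        rw [this]
        have : x - ((c:ℤ) * e + dotZ cst tl) = (x - dotZ cst tl) - (c:ℤ)*e := by ring
        rw [this]; exact hcd

lemma forall₂_sum_le {cs caps' : List ℕ} (h : List.Forall₂ (· ≤ ·) cs caps') :
    cs.sum ≤ caps'.sum := by
  induction h with
  | nil => simp
  | cons h _ ih => simp; omega

lemma dotZ_nonneg : ∀ (cs es : List ℕ), 0 ≤ dotZ cs es := by
  intro cs
  induction cs with
  | nil => intro es; simp [dotZ]
  | cons c tl ih =>
      intro es
      rcases es with _ | ⟨e, etl⟩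
      · simp [dotZ]
      · have h1 := ih etl
        simp only [dotZ, List.zipWith_cons_cons, List.sum_cons] at *
        have hc : (0:ℤ) ≤ (c:ℤ) * (e:ℤ) := by positivity
        linarith

lemma dotZ_le {K : ℕ} : ∀ (cs es : List ℕ), (∀ e ∈ es, e ≤ K) →
    dotZ cs es ≤ (cs.sum : ℤ) * K := by
  intro cs
  induction cs with
  | nil => intro es h; simp [dotZ]
  | cons c tl ih =>
      intro es h
      rcases es with _ | ⟨e, etl⟩
      · simp only [dotZ, List.zipWith_nil_right, List.sum_nil]
        positivity
      · have h1 := ih etl (fun e' he' => h e' (List.mem_cons_of_mem _ he'))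
        have h2 : (e:ℤ) ≤ K := by exact_mod_cast h e List.mem_cons_self
        simp only [dotZ, List.zipWith_cons_cons, List.sum_cons] at *
        have hc : (0:ℤ) ≤ (c:ℤ) := by positivity
        have hce : (c:ℤ) * (e:ℤ) ≤ (c:ℤ) * (K:ℤ) := mul_le_mul_of_nonneg_left h2 hc
        push_cast at h1 ⊢
        nlinarith [hce]

lemma chain_aux (S : Set ℤ) (K : ℕ) (N₀ : ℤ) (d : ℕ)
    (win : ∀ z : ℤ, N₀ ≤ z → ∃ s ∈ S, z < s ∧ s ≤ z + K)
    (hd : ∀ s ∈ S, N₀ ≤ s → ∀ e : ℕ, 1 ≤ e → e ≤ K → s + (e:ℤ) ∈ S → (d:ℤ) ∣ (e:ℤ)) :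
    ∀ n : ℕ, ∀ s, s ∈ S → N₀ ≤ s → ∀ s', s' ∈ S → N₀ ≤ s' → s ≤ s' →
      (s' - s).toNat = n → (d:ℤ) ∣ s' - s := by
  intro n
  induction n using Nat.strong_induction_on with
  | _ n ih =>
    intro s hs hNs s' hs' hNs' hle hn
    rcases le_or_gt (s' - s) K with hcase | hcase
    · rcases eq_or_lt_of_le hle with rfl | hlt
      · simp
      · set e := (s' - s).toNat with he
        have hecast : (e : ℤ) = s' - s := Int.toNat_of_nonneg (by omega)
        have h1 : 1 ≤ e := by omega
        have h2 : e ≤ K := by omega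
        have := hd s hs hNs e h1 h2 (by rw [hecast, show s + (s' - s) = s' by ring]; exact hs')
        rwa [hecast] at this
    · obtain ⟨t, ht, hlt, hle2⟩ := win s hNs
      have hNt : N₀ ≤ t := by omega
      have hd1 : (d:ℤ) ∣ t - s := by
        set e := (t - s).toNat with he
        have hecast : (e : ℤ) = t - s := Int.toNat_of_nonneg (by omega)
        have h1 : 1 ≤ e := by omega
        have h2 : e ≤ K := by omega
        have := hd s hs hNs e h1 h2 (by rw [hecast, show s + (t - s) = t by ring]; exact ht)
        rwa [hecast] at this
      have hts' : t ≤ s' := by omega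
      have hd2 : (d:ℤ) ∣ s' - t := by
        apply ih (s' - t).toNat (by omega) t ht hNt s' hs' hNs' hts' rfl
      have : s' - s = (s' - t) + (t - s) := by ring
      rw [this]
      exact dvd_add hd2 hd1

lemma chain (S : Set ℤ) (K : ℕ) (N₀ : ℤ) (d : ℕ)
    (win : ∀ z : ℤ, N₀ ≤ z → ∃ s ∈ S, z < s ∧ s ≤ z + K)
    (hd : ∀ s ∈ S, N₀ ≤ s → ∀ e : ℕ, 1 ≤ e → e ≤ K → s + (e:ℤ) ∈ S → (d:ℤ) ∣ (e:ℤ)) :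
    ∀ s, s ∈ S → N₀ ≤ s → ∀ s', s' ∈ S → N₀ ≤ s' → (d:ℤ) ∣ s' - s := by
  intro s hs hNs s' hs' hNs'
  rcases le_total s s' with hle | hle
  · exact chain_aux S K N₀ d win hd _ s hs hNs s' hs' hNs' hle rfl
  · have hdd := chain_aux S K N₀ d win hd _ s' hs' hNs' s hs hNs hle rfl
    have : s' - s = -(s - s') := by ring
    rw [this]
    exact dvd_neg.mpr hdd

lemma slot (B : Set ℤ) (h : ℕ) {p : ℤ} {e : ℕ} (hp : p ∈ nfold B h)
    (hpe : p + (e:ℤ) ∈ nfold B h) :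
    ∀ (C c : ℕ), c ≤ C → (C:ℤ) * p + (c:ℤ) * e ∈ nfold B (C * h) := by
  intro C c hc
  have h1 := nfold_nsmul_mem hp (C - c)
  have h2 := nfold_nsmul_mem hpe c
  have h3 := nfold_add_mem h1 h2
  have he : (C - c) * h + c * h = C * h := by
    rw [← Nat.add_mul]; congr 1; omega
  rw [he] at h3
  convert h3 using 1
  have hcast : ((C - c : ℕ) : ℤ) = (C:ℤ) - (c:ℤ) := by
    have := Nat.cast_sub (R := ℤ) hc; exact this
  rw [hcast]; ring

lemma realize (B : Set ℤ) (h : ℕ) (p : ℕ → ℤ) :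
    ∀ (es cs caps' : List ℕ), List.Forall₂ (· ≤ ·) cs caps' → cs.length = es.length →
    (∀ e ∈ es, p e ∈ nfold B h ∧ p e + (e:ℤ) ∈ nfold B h) →
    (List.zipWith (fun (C e : ℕ) => (C:ℤ) * p e) caps' es).sum + dotZ cs es
      ∈ nfold B (caps'.sum * h) := by
  intro es
  induction es with
  | nil =>
      intro cs caps' hf hlen hwit
      have hcs : cs = [] := List.length_eq_zero_iff.mp hlen
      subst hcs
      have hcaps : caps' = [] := (List.forall₂_nil_left_iff.mp hf)
      subst hcaps
      simp [dotZ, mem_nfold_zero]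
  | cons e etl ihe =>
      intro cs caps' hf hlen hwit
      rcases cs with _ | ⟨c, ctl⟩
      · simp at hlen
      rcases caps' with _ | ⟨C, Ctl⟩
      · exact absurd hf (by simp)
      have hf' := List.forall₂_cons.mp hf
      obtain ⟨hcC, hftl⟩ := hf'
      have hwit1 := hwit e List.mem_cons_self
      have ih := ihe ctl Ctl hftl (by simpa using hlen)
        (fun e' he' => hwit e' (List.mem_cons_of_mem _ he'))
      have hs := slot B h hwit1.1 hwit1.2 C c hcC
      have h3 := nfold_add_mem hs ih
      have he : C * h + Ctl.sum * h = (C :: Ctl).sum * h := by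
        simp [List.sum_cons, Nat.add_mul]
      rw [he] at h3
      convert h3 using 1
      simp only [dotZ, List.zipWith_cons_cons, List.sum_cons] at *
      ring

lemma nfold_bdd {B : Set ℤ} {M : ℤ} (hM : ∀ b ∈ B, b ≤ M) (hM0 : 0 ≤ M) :
    ∀ t, ∀ x ∈ nfold B t, x ≤ t * M := by
  intro t
  induction t with
  | zero => intro x hx; rw [mem_nfold_zero] at hx; simp [hx]
  | succ n ih =>
      intro x hx
      rw [mem_nfold_succ] at hx
      obtain ⟨a, ha, w, hw, rfl⟩ := hx
      have h1 := hM a ha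
      have h2 := ih w hw
      push_cast
      nlinarith

lemma nfold_cong {B : Set ℤ} {d : ℕ} (hB : ∀ b ∈ B, ∀ b' ∈ B, (d:ℤ) ∣ b' - b) :
    ∀ t, ∀ x ∈ nfold B t, ∀ y ∈ nfold B t, (d:ℤ) ∣ y - x := by
  intro t
  induction t with
  | zero => intro x hx y hy; rw [mem_nfold_zero] at hx hy; subst hx; subst hy; simp
  | succ n ih =>
      intro x hx y hy
      rw [mem_nfold_succ] at hx hy
      obtain ⟨a, ha, w, hw, rfl⟩ := hx
      obtain ⟨a', ha', w', hw', rfl⟩ := hy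
      have h1 := hB a ha a' ha'
      have h2 := ih w hw w' hw'
      have : a' + w' - (a + w) = (a' - a) + (w' - w) := by ring
      rw [this]
      exact dvd_add h1 h2


lemma caps_length : ∀ (es : List ℕ) (γ : ℕ), (caps γ es).length = es.length := by
  intro es
  induction es with
  | nil => intro γ; simp [caps]
  | cons e tl ih => intro γ; simp [caps, ih]

theorem stmt3 (A : Set ℤ) (hfin : (A ∩ {x | x < 0}).Finite) (h : ℕ)
    (hA : IsAsympBasis A) (hord : basisOrder A ≤ h)
    (X : Set ℤ) (hXfin : X.Finite) (hXA : X ⊆ A)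
    (hAX : IsAsympBasis (A \ X))
    (μ : ℤ) (hμ : IsLeast {m : ℤ | ∃ y ∈ A \ X, m = diam (X ∪ {y})} μ) :
    (basisOrder (A \ X) : ℤ) ≤ 4 * h * (2 * h * μ + 1) := by
  classical
  set B := A \ X with hBdef
  obtain ⟨hμmem, hμlb⟩ := hμ
  obtain ⟨y₀, hy₀, hμeq⟩ := hμmem
  have hy₀A : y₀ ∈ A := hy₀.1
  have hy₀X : y₀ ∉ X := hy₀.2
  have hXyfin : (X ∪ {y₀}).Finite := hXfin.union (Set.finite_singleton _)
  have hbddAb : BddAbove (X ∪ {y₀}) := hXyfin.bddAbove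
  have hbddBe : BddBelow (X ∪ {y₀}) := hXyfin.bddBelow
  have hy₀mem : y₀ ∈ X ∪ {y₀} := Or.inr rfl
  have hpair : ∀ x ∈ X ∪ {y₀}, ∀ x' ∈ X ∪ {y₀}, x - x' ≤ μ := by
    intro x hx x' hx'
    have h1 : x ≤ sSup (X ∪ {y₀}) := le_csSup hbddAb hx
    have h2 : sInf (X ∪ {y₀}) ≤ x' := csInf_le hbddBe hx'
    rw [hμeq]
    unfold diam
    omega
  have hμ0 : 0 ≤ μ := by have := hpair y₀ hy₀mem y₀ hy₀mem; omega
  have hxy : ∀ x ∈ X, x - y₀ ≤ μ ∧ y₀ - x ≤ μ := fun x hx =>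
    ⟨hpair x (Or.inl hx) y₀ hy₀mem, hpair y₀ hy₀mem x (Or.inl hx)⟩
  -- basisOrder A facts
  have hbo : CoversAt A (basisOrder A) := Nat.sInf_mem hA
  have hbo1 : 1 ≤ basisOrder A := by
    rcases Nat.eq_zero_or_pos (basisOrder A) with h0 | h1
    · rw [h0] at hbo; exact absurd hbo coversAt_zero_false
    · exact h1
  have h1le : 1 ≤ h := le_trans hbo1 hord
  have hcovA : CoversAt A h := coversAt_mono hbo hord
  -- replacement lemma
  have hy₀B : y₀ ∈ B := hy₀
  have hrepl : ∀ t : ℕ, ∀ m ∈ nfold A t,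
      ∃ s ∈ nfold B t, m - (t:ℤ) * μ ≤ s ∧ s ≤ m + (t:ℤ) * μ := by
    intro t
    induction t with
    | zero =>
        intro m hm
        rw [mem_nfold_zero] at hm
        exact ⟨0, by simp [mem_nfold_zero], by simp [hm], by simp [hm]⟩
    | succ n ih =>
        intro m hm
        rw [mem_nfold_succ] at hm
        obtain ⟨a, ha, w, hw, rfl⟩ := hm
        obtain ⟨s₀, hs₀, hlb, hub⟩ := ih w hw
        by_cases hax : a ∈ X
        · have h1 := (hxy a hax).1
          have h2 := (hxy a hax).2
          refine ⟨y₀ + s₀, by rw [mem_nfold_succ]; exact ⟨y₀, hy₀B, s₀, hs₀, rfl⟩, ?_, ?_⟩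
          · push_cast; linarith
          · push_cast; linarith
        · have haB : a ∈ B := ⟨ha, hax⟩
          refine ⟨a + s₀, by rw [mem_nfold_succ]; exact ⟨a, haB, s₀, hs₀, rfl⟩, ?_, ?_⟩
          · push_cast; linarith
          · push_cast; linarith
  rcases Nat.lt_or_ge h 2 with hh2 | hh2
  -- case h = 1
  · have hheq : h = 1 := by omega
    subst hheq
    obtain ⟨N, hN⟩ := iCov_of_coversAt hcovA
    obtain ⟨MX, hMX⟩ := hXfin.bddAbove
    have hicov : ICov B 1 := by
      refine ⟨max N (MX + 1), fun z hz => ?_⟩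
      have hzA : z ∈ nfold A 1 := hN z (le_trans (le_max_left _ _) hz)
      rw [mem_nfold_succ] at hzA
      obtain ⟨a, ha, w, hw, rfl⟩ := hzA
      rw [mem_nfold_zero] at hw
      subst hw
      have hzX : a ∉ X := by
        intro hmem
        have := hMX hmem
        have h2 : MX + 1 ≤ a + 0 := le_trans (le_max_right _ _) hz
        omega
      rw [mem_nfold_succ]
      exact ⟨a, ⟨ha, hzX⟩, 0, by rw [mem_nfold_zero], rfl⟩
    have hle1 : basisOrder B ≤ 1 := Nat.sInf_le (coversAt_of_iCov hicov)
    have hc : (basisOrder B : ℤ) ≤ 1 := by exact_mod_cast hle1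
    push_cast at hc ⊢
    linarith
  -- main case h ≥ 2
  · obtain ⟨M₀, hM₀⟩ := iCov_of_coversAt hcovA
    set K : ℕ := 2 * h * μ.toNat + 1 with hKdef
    have hKcast : (K : ℤ) = 2 * h * μ + 1 := by
      rw [hKdef]
      push_cast
      rw [Int.toNat_of_nonneg hμ0]
    have hK1 : 1 ≤ K := by omega
    have hhμ : (0:ℤ) ≤ (h:ℤ) * μ := mul_nonneg (by positivity) hμ0
    set N₀ : ℤ := max M₀ 1 with hN₀def
    have hN₀1 : 1 ≤ N₀ := le_max_right _ _
    -- window property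
    have win : ∀ z : ℤ, N₀ ≤ z → ∃ s ∈ nfold B h, z < s ∧ s ≤ z + (K:ℤ) := by
      intro z hz
      have hM₀z : M₀ ≤ z := le_trans (le_max_left _ _) hz
      have hm : z + 1 + (h:ℤ) * μ ∈ nfold A h := hM₀ _ (by linarith)
      obtain ⟨s, hs, hlb, hub⟩ := hrepl h _ hm
      refine ⟨s, hs, by linarith, by rw [hKcast]; linarith⟩
    -- the set of far local difference values
    set E : Finset ℕ := (Finset.Icc 1 K).filter
      (fun e => ∃ s : ℤ, s ∈ nfold B h ∧ N₀ ≤ s ∧ s + (e:ℤ) ∈ nfold B h) with hEdef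
    have hEmem : ∀ e : ℕ, e ∈ E ↔ (1 ≤ e ∧ e ≤ K) ∧
        ∃ s : ℤ, s ∈ nfold B h ∧ N₀ ≤ s ∧ s + (e:ℤ) ∈ nfold B h := by
      intro e
      rw [hEdef, Finset.mem_filter, Finset.mem_Icc]
    obtain ⟨s₁, hs₁S, hs₁lb, hs₁ub⟩ := win N₀ le_rfl
    obtain ⟨s₂, hs₂S, hs₂lb, hs₂ub⟩ := win s₁ (by omega)
    have hEne : E.Nonempty := by
      refine ⟨(s₂ - s₁).toNat, ?_⟩
      rw [hEmem]
      refine ⟨by omega, s₁, hs₁S, by omega, ?_⟩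
      rw [Int.toNat_of_nonneg (by omega), show s₁ + (s₂ - s₁) = s₂ by ring]
      exact hs₂S
    set γ : ℕ := E.max' hEne with hγdef
    have hγE : γ ∈ E := E.max'_mem hEne
    have hγbounds : 1 ≤ γ ∧ γ ≤ K := ((hEmem γ).mp hγE).1
    have hγpos : 0 < γ := hγbounds.1
    have hγposZ : (0:ℤ) < (γ:ℤ) := by exact_mod_cast hγpos
    set es : List ℕ := E.toList with hesdef
    have hesmem : ∀ e ∈ es, e ∈ E := by
      intro e he; rwa [hesdef, Finset.mem_toList] at he
    set d : ℕ := modgcd γ es with hddef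
    have hdE : ∀ e ∈ E, (d:ℤ) ∣ (e:ℤ) := by
      intro e he
      exact_mod_cast modgcd_dvd_mem es γ e (by rwa [hesdef, Finset.mem_toList])
    have hdloc : ∀ s ∈ nfold B h, N₀ ≤ s → ∀ e : ℕ, 1 ≤ e → e ≤ K →
        s + (e:ℤ) ∈ nfold B h → (d:ℤ) ∣ (e:ℤ) := by
      intro s hs hNs e h1 h2 hse
      exact hdE e ((hEmem e).mpr ⟨⟨h1, h2⟩, s, hs, hNs, hse⟩)
    have hchain := chain (nfold B h) K N₀ d win hdloc
    -- B is unbounded above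
    obtain ⟨gB, hgB⟩ := hAX
    obtain ⟨NB, hNB⟩ := iCov_of_coversAt hgB
    have hBub : ∀ c : ℤ, ∃ b ∈ B, c ≤ b := by
      intro c
      by_contra hcon
      push_neg at hcon
      have hble : ∀ b ∈ B, b ≤ |c| := fun b hb =>
        le_trans (le_of_lt (hcon b hb)) (le_abs_self c)
      have hbd := nfold_bdd hble (abs_nonneg c) gB
      have hz := hNB (max NB ((gB:ℤ) * |c| + 1)) (le_max_left _ _)
      have h2 := hbd _ hz
      have h3 : (gB:ℤ) * |c| + 1 ≤ max NB ((gB:ℤ) * |c| + 1) := le_max_right _ _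
      omega
    -- all elements of B are congruent mod d
    have hBcong : ∀ b ∈ B, ∀ b' ∈ B, (d:ℤ) ∣ b' - b := by
      intro b hb b' hb'
      obtain ⟨c, hcB, hcge⟩ := hBub (N₀ + |b| + |b'| + 1)
      have hc1 : 1 ≤ c := by
        have := abs_nonneg b; have := abs_nonneg b'; omega
      have hcast1 : (1:ℤ) ≤ ((h-1:ℕ):ℤ) := by
        have : 1 ≤ h - 1 := by omega
        exact_mod_cast this
      have hp : ((h-1:ℕ):ℤ) * c ∈ nfold B (h-1) := by
        have := nfold_nsmul_mem (mem_nfold_one hcB) (h-1)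
        rwa [Nat.mul_one] at this
      have hsum : ∀ u : ℤ, u ∈ B → u + ((h-1:ℕ):ℤ) * c ∈ nfold B h := by
        intro u hu
        have := nfold_add_mem (mem_nfold_one hu) hp
        rwa [show 1 + (h-1) = h by omega] at this
      have hcbig : c ≤ ((h-1:ℕ):ℤ) * c := le_mul_of_one_le_left (by omega) hcast1
      have hpos1 : N₀ ≤ b + ((h-1:ℕ):ℤ) * c := by
        have h5 := neg_le_abs b
        have h6 := abs_nonneg b'
        linarith only [hcbig, hcge, h5, h6]
      have hpos2 : N₀ ≤ b' + ((h-1:ℕ):ℤ) * c := by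
        have h5 := neg_le_abs b'
        have h6 := abs_nonneg b
        linarith only [hcbig, hcge, h5, h6]
      have := hchain _ (hsum b hb) hpos1 _ (hsum b' hb') hpos2
      have heq : b' + ((h-1:ℕ):ℤ) * c - (b + ((h-1:ℕ):ℤ) * c) = b' - b := by ring
      rwa [heq] at this
    -- d = 1
    have hd1 : d = 1 := by
      have hcong := nfold_cong hBcong gB
      have hz1 := hNB (max NB 0) (le_max_left _ _)
      have hz2 := hNB (max NB 0 + 1) (by omega)
      have hdvd := hcong _ hz1 _ hz2
      have h1 : (d:ℤ) ∣ 1 := by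
        have : max NB 0 + 1 - max NB 0 = 1 := by ring
        rwa [this] at hdvd
      have h2 : d ∣ 1 := by exact_mod_cast h1
      exact Nat.dvd_one.mp h2
    have hmodgcd : modgcd γ es = 1 := by rw [← hddef]; exact hd1
    -- witness points
    set pfun : ℕ → ℤ := fun e =>
      if hw : ∃ s : ℤ, s ∈ nfold B h ∧ N₀ ≤ s ∧ s + (e:ℤ) ∈ nfold B h then hw.choose else 0
      with hpfundef
    have hpspec : ∀ e ∈ E, pfun e ∈ nfold B h ∧ N₀ ≤ pfun e ∧
        pfun e + (e:ℤ) ∈ nfold B h := by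
      intro e he
      obtain ⟨-, hw⟩ := (hEmem e).mp he
      rw [hpfundef]
      simp only [dif_pos hw]
      exact hw.choose_spec
    set capsL : List ℕ := caps γ es with hcapsLdef
    have hcapsum : capsL.sum ≤ γ - 1 := caps_sum_le es γ hγpos
    set Pγ : ℤ := pfun γ with hPγdef
    have hPγspec := hpspec γ hγE
    set baseGen : ℤ := (List.zipWith (fun (C e : ℕ) => (C:ℤ) * pfun e) capsL es).sum
      with hbaseGendef
    set base : ℤ := 2 * (K:ℤ) * Pγ + baseGen with hbasedef
    set L : ℤ := (γ:ℤ) * (K:ℤ) with hLdef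
    have hL0 : 0 ≤ L := by positivity
    set T : ℕ := 1 + 2 * K + capsL.sum with hTdef
    -- the covering
    have hicovB : ICov B (T * h) := by
      refine ⟨N₀ + (K:ℤ) + |base| + L + (K:ℤ) + 1, fun n hn => ?_⟩
      set w : ℤ := n - base - L - (K:ℤ) with hwdef
      have hwN : N₀ ≤ w := by
        have h5 := le_abs_self base
        linarith only [hn, hwdef, h5, hL0]
      obtain ⟨s, hsS, hslb, hsub⟩ := win w hwN
      set x : ℤ := n - base - s with hxdef
      have hxlb : L ≤ x := by omega
      have hxub : x < L + (K:ℤ) := by omega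
      obtain ⟨cs, hcsf, hdvd⟩ := stair es γ hγpos hmodgcd x
      have hW0 : 0 ≤ dotZ cs es := dotZ_nonneg cs es
      have hK0 : (0:ℤ) ≤ (K:ℤ) := by positivity
      have hKZ1 : (1:ℤ) ≤ (K:ℤ) := by exact_mod_cast hK1
      have hγ1Z : (1:ℤ) ≤ (γ:ℤ) := by exact_mod_cast hγpos
      have hWle : dotZ cs es ≤ ((γ:ℤ) - 1) * (K:ℤ) := by
        have hle1 := dotZ_le (K := K) cs es (fun e he => ((hEmem e).mp (hesmem e he)).1.2)
        have hle3 : (cs.sum : ℤ) ≤ (γ:ℤ) - 1 := by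
          have hle2 : cs.sum ≤ capsL.sum := forall₂_sum_le hcsf
          omega
        have hle4 : (cs.sum:ℤ) * (K:ℤ) ≤ ((γ:ℤ) - 1) * (K:ℤ) :=
          mul_le_mul_of_nonneg_right hle3 hK0
        linarith only [hle1, hle4]
      obtain ⟨c₁z, hc₁z⟩ := hdvd
      have hexpand : ((γ:ℤ) - 1) * (K:ℤ) = (γ:ℤ) * (K:ℤ) - (K:ℤ) := by ring
      have hxW1 : (K:ℤ) ≤ x - dotZ cs es := by
        linarith only [hxlb, hWle, hexpand, hLdef]
      have hxW2 : x - dotZ cs es < L + (K:ℤ) := by linarith only [hxub, hW0]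
      have hc₁z0 : 0 ≤ c₁z := by
        rcases le_or_gt 0 c₁z with hok | hneg
        · exact hok
        · have hbad : (γ:ℤ) * c₁z < 0 := mul_neg_of_pos_of_neg hγposZ hneg
          linarith only [hxW1, hc₁z, hbad, hKZ1]
      have hc₁zle : c₁z ≤ 2 * (K:ℤ) := by
        by_contra hcon
        push_neg at hcon
        have h5 : (γ:ℤ) * (2*(K:ℤ)+1) ≤ (γ:ℤ) * c₁z :=
          mul_le_mul_of_nonneg_left (by linarith only [hcon]) (le_of_lt hγposZ)
        have h6 : (K:ℤ) ≤ (γ:ℤ) * (K:ℤ) := le_mul_of_one_le_left hK0 hγ1Z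
        have h7 : (γ:ℤ) * (2*(K:ℤ)+1) = 2*((γ:ℤ)*(K:ℤ)) + (γ:ℤ) := by ring
        linarith only [hc₁z, hxW2, hLdef, h5, h6, h7, hγ1Z]
      set c₁ : ℕ := c₁z.toNat with hc₁def
      have hc₁cast : (c₁:ℤ) = c₁z := Int.toNat_of_nonneg hc₁z0
      have hc₁le : c₁ ≤ 2 * K := by omega
      have hmod : ((2*K:ℕ):ℤ) * Pγ + (c₁:ℤ) * (γ:ℤ) ∈ nfold B ((2*K) * h) :=
        slot B h hPγspec.1 hPγspec.2.2 (2*K) c₁ hc₁le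
      have hlen : cs.length = es.length := by
        have h1 := List.Forall₂.length_eq hcsf
        rw [h1]
        exact caps_length es γ
      have hgen : baseGen + dotZ cs es ∈ nfold B (capsL.sum * h) := by
        have := realize B h pfun es cs capsL hcsf hlen
          (fun e he => ⟨(hpspec e (hesmem e he)).1, (hpspec e (hesmem e he)).2.2⟩)
        rwa [← hbaseGendef] at this
      have hexp : T * h = h + (2*K) * h + capsL.sum * h := by rw [hTdef]; ring
      rw [hexp]
      have hval : n = s + (((2*K:ℕ):ℤ) * Pγ + (c₁:ℤ) * (γ:ℤ)) + (baseGen + dotZ cs es) := by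
        have hprod : (c₁:ℤ) * (γ:ℤ) = x - dotZ cs es := by
          rw [hc₁cast, mul_comm]; exact hc₁z.symm
        have hc2 : ((2*K:ℕ):ℤ) = 2 * (K:ℤ) := by push_cast; ring
        rw [hc2]
        linarith only [hprod, hxdef, hbasedef]
      rw [hval]
      exact nfold_add_mem (nfold_add_mem hsS hmod) hgen
    have hfin : basisOrder B ≤ T * h := Nat.sInf_le (coversAt_of_iCov hicovB)
    have hTle : T ≤ 3 * K := by omega
    have hfin2 : (basisOrder B : ℤ) ≤ (T:ℤ) * (h:ℤ) := by exact_mod_cast hfin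
    have hKZ : (1:ℤ) ≤ (K:ℤ) := by exact_mod_cast hK1
    have hTZ : (T:ℤ) ≤ 3 * (K:ℤ) := by exact_mod_cast hTle
    have hhZ : (2:ℤ) ≤ (h:ℤ) := by exact_mod_cast hh2
    have h4 : 4 * (h:ℤ) * (2 * (h:ℤ) * μ + 1) = 4 * (h:ℤ) * (K:ℤ) := by rw [hKcast]
    rw [h4]
    have hh0 : (0:ℤ) ≤ (h:ℤ) := by positivity
    have p1 : (T:ℤ) * (h:ℤ) ≤ 3 * (K:ℤ) * (h:ℤ) := mul_le_mul_of_nonneg_right hTZ hh0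
    have p2 : (0:ℤ) ≤ (h:ℤ) * (K:ℤ) := by positivity
    have hr : 3 * (K:ℤ) * (h:ℤ) + (h:ℤ) * (K:ℤ) = 4 * (h:ℤ) * (K:ℤ) := by ring
    linarith only [hfin2, p1, p2, hr]
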